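/- Let d : V → ℝ on finite V, L ⊆ V nonempty, S ⊆ T ⊆ V, e ∈ V, and write D_S = min_{j ∈ S ∪ L} d(j), D_T = min_{j ∈ T ∪ L} d(j), m = d(e). For any antitone f and any constant u, the difference of marginal gains Δ = [f(min(m, D_S) + u) − f(D_S + u)] − [f(min(m, D_T) + u) − f(D_T + u)] is nonnegative. -/

import Mathlib

/-- shifted scalar core of the multi-amenity-type submodularity proof:
with `D_S = min_{j ∈ S ∪ L} d j`, `D_T = min_{j ∈ T ∪ L} d j`, `m = d e`, `f` antitone
and `u` any constant shift, the difference of marginal gains is nonnegative. -/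
theorem stmt_19 {V : Type*} [Fintype V] [DecidableEq V]
    (d : V → ℝ) (L : Finset V) (hL : L.Nonempty)
    (S T : Finset V) (hST : S ⊆ T) (e : V)
    (f : ℝ → ℝ) (hf : Antitone f) (u : ℝ)
    (DS DT m : ℝ)
    (hDS : DS = (S ∪ L).inf' (hL.mono Finset.subset_union_right) d)
    (hDT : DT = (T ∪ L).inf' (hL.mono Finset.subset_union_right) d)
    (hm : m = d e) :
    0 ≤ (f (min m DS + u) - f (DS + u)) - (f (min m DT + u) - f (DT + u)) := by
  have hTS : DT ≤ DS := by
    rw [hDS, hDT]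
    apply Finset.inf'_mono
    exact Finset.union_subset_union_left hST
  rcases le_or_gt DS m with h1 | h1
  · rw [min_eq_right h1, min_eq_right (hTS.trans h1)]
    ring_nf
    simp
  · rw [min_eq_left h1.le]
    rcases le_or_gt DT m with h2 | h2
    · rw [min_eq_right h2]
      have := hf (add_le_add_left h1.le u)
      have := hf (add_le_add_left hTS u)
      linarith
    · rw [min_eq_left h2.le]
      have := hf (add_le_add_left h1.le u)
      have := hf (add_le_add_left hTS u)
      linarith
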